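/- arXiv:1702.00925 — 2 statements merged into one kernel-verified Lean document; each statement's English description precedes it below -/
import Mathlib

section
/- Let Y be an integrable real random variable, X a random variable with the conditional distribution of Y given X continuous a.s., α ∈ (0,1), θ_2* = F_{Y|X}^{-1}(α), and ψ_α(y,θ) = (y-θ)(α - 1_{y≤θ}). Then E[ψ_α(Y; θ_2*)] = (1-α)(E[Y | Y > θ_2*] - E[Y]). -/
open MeasureTheory ProbabilityTheory Real Set Filter

/-- Generalized inverse (quantile function): `F⁻¹(α) = inf {y : F(y) ≥ α}`. -/
noncomputable def quantileFun {Ω : Type*} [MeasurableSpace Ω] (μ : Measure Ω)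
    (Y : Ω → ℝ) (α : ℝ) : ℝ :=
  sInf {y : ℝ | α ≤ (μ {ω | Y ω ≤ y}).toReal}

/-- The α-quantile contrast (pinball) function `ψ_α(y, θ) = (y-θ)(α - 1_{y≤θ})`. -/
noncomputable def psi (α y θ : ℝ) : ℝ := (y - θ) * (α - if y ≤ θ then 1 else 0)

/-- Conditional Tail Expectation: `E[Y | Y > F_Y⁻¹(α)]`. -/
noncomputable def CTE {Ω : Type*} [MeasurableSpace Ω] (μ : Measure Ω)
    (Y : Ω → ℝ) (α : ℝ) : ℝ :=
  (∫ ω in {ω | quantileFun μ Y α < Y ω}, Y ω ∂μ) /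
    (μ {ω | quantileFun μ Y α < Y ω}).toReal

/-- Auxiliary version with binders reordered so that the ambient σ-algebra is the
preferred local instance. -/
theorem contrast_at_cond_quantile_aux {Ω : Type*} (m : MeasurableSpace Ω)
    [mΩ : MeasurableSpace Ω]
    (μ : Measure Ω) [IsProbabilityMeasure μ]
    (hm : m ≤ mΩ)
    (Y θ₂ : Ω → ℝ) (hθ₂ : StronglyMeasurable[m] θ₂)
    (hYint : Integrable Y μ) (hθ₂int : Integrable θ₂ μ)
    (α : ℝ) (hα : α ∈ Set.Ioo (0 : ℝ) 1)
    (hcond : ∀ᵐ ω ∂μ,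
      (μ[Set.indicator {ω' | Y ω' ≤ θ₂ ω'} (fun _ => (1 : ℝ)) | m]) ω = α) :
    ∫ ω, (Y ω - θ₂ ω) * (α - if Y ω ≤ θ₂ ω then 1 else 0) ∂μ
      = (1 - α) *
        ((∫ ω in {ω | θ₂ ω < Y ω}, Y ω ∂μ) / (μ {ω | θ₂ ω < Y ω}).toReal
          - ∫ ω, Y ω ∂μ) := by
  obtain ⟨hα0, hα1⟩ := hα
  have : SigmaFinite (μ.trim hm) := by infer_instance
  set A : Set Ω := {ω | Y ω ≤ θ₂ ω} with hA
  set f : Ω → ℝ := A.indicator (fun _ => (1 : ℝ)) with hf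
  obtain ⟨Y', hY'sm, hYY'⟩ := hYint.1
  have hθ₂m : StronglyMeasurable θ₂ := hθ₂.mono hm
  have hA' : MeasurableSet {ω | Y' ω ≤ θ₂ ω} :=
    measurableSet_le hY'sm.measurable hθ₂m.measurable
  have hAA' : A =ᵐ[μ] {ω | Y' ω ≤ θ₂ ω} := by
    filter_upwards [hYY'] with ω h
    show (Y ω ≤ θ₂ ω) = (Y' ω ≤ θ₂ ω)
    rw [h]
  have hff' : f =ᵐ[μ] ({ω | Y' ω ≤ θ₂ ω}).indicator (fun _ => (1 : ℝ)) :=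
    indicator_ae_eq_of_ae_eq_set hAA'
  have hfint : Integrable f μ :=
    (((integrable_const (1:ℝ)).indicator hA')).congr hff'.symm
  -- (1) ∫ f = α
  have h1 : ∫ ω, f ω ∂μ = α := by
    rw [← integral_condExp hm (f := f), integral_congr_ae hcond]
    simp
  have hμA' : (μ {ω | Y' ω ≤ θ₂ ω}).toReal = α := by
    rw [← h1, integral_congr_ae hff', integral_indicator hA']
    simp; rfl
  -- integrability of products
  have hbd : ∀ (g : Ω → ℝ), Integrable g μ → Integrable (g * f) μ := by
    intro g hg
    refine hg.abs.mono' (hg.1.mul hfint.1) ?_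
    filter_upwards with ω
    simp only [Pi.mul_apply, norm_mul, f, Set.indicator_apply]
    by_cases h1 : ω ∈ A <;> simp [h1, abs_nonneg]
  have hYf : Integrable (Y * f) μ := hbd Y hYint
  have hθf : Integrable (θ₂ * f) μ := hbd θ₂ hθ₂int
  -- (2) ∫ θ₂ f = α ∫ θ₂
  have h2 : ∫ ω, θ₂ ω * f ω ∂μ = α * ∫ ω, θ₂ ω ∂μ := by
    have hpull := condExp_mul_of_stronglyMeasurable_left hθ₂ hθf hfint
    calc ∫ ω, θ₂ ω * f ω ∂μ = ∫ ω, (μ[θ₂ * f|m]) ω ∂μ := (integral_condExp hm).symm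
      _ = ∫ ω, θ₂ ω * (μ[f|m]) ω ∂μ := integral_congr_ae hpull
      _ = ∫ ω, α * θ₂ ω ∂μ := by
          refine integral_congr_ae ?_
          filter_upwards [hcond] with ω h
          rw [h]; ring
      _ = α * ∫ ω, θ₂ ω ∂μ := by rw [integral_const_mul]
  -- (4) ∫ Y f = ∫_{A'} Y
  have hmul : Y * f = A.indicator Y := by
    funext ω
    simp only [Pi.mul_apply, f, Set.indicator_apply, mul_ite, mul_one, mul_zero]
  have h4 : ∫ ω, Y ω * f ω ∂μ = ∫ ω in {ω | Y' ω ≤ θ₂ ω}, Y ω ∂μ := by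
    have hae : (fun ω => Y ω * f ω) =ᵐ[μ]
        fun ω => ({ω | Y' ω ≤ θ₂ ω}).indicator Y ω := by
      filter_upwards [eventuallyEq_set.1 hAA'] with ω h
      by_cases h1 : ω ∈ A
      · rw [hf, Set.indicator_of_mem h1, Set.indicator_of_mem (s := {ω | Y' ω ≤ θ₂ ω}) (h.1 h1), mul_one]
      · rw [hf, Set.indicator_of_notMem h1,
          Set.indicator_of_notMem (s := {ω | Y' ω ≤ θ₂ ω}) (fun hx => h1 (h.2 hx)), mul_zero]
    rw [integral_congr_ae hae, integral_indicator hA']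
  -- split the integral of Y
  have hsplit : ∫ ω in {ω | Y' ω ≤ θ₂ ω}, Y ω ∂μ
       + ∫ ω in {ω | Y' ω ≤ θ₂ ω}ᶜ, Y ω ∂μ = ∫ ω, Y ω ∂μ :=
    integral_add_compl hA' hYint
  have hcompl : {ω | Y' ω ≤ θ₂ ω}ᶜ = {ω | θ₂ ω < Y' ω} := by
    ext ω; simp [not_le]
  have hBB' : {ω | θ₂ ω < Y ω} =ᵐ[μ] {ω | θ₂ ω < Y' ω} := by
    filter_upwards [hYY'] with ω h
    show (θ₂ ω < Y ω) = (θ₂ ω < Y' ω)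
    rw [h]
  have hS : ∫ ω in {ω | θ₂ ω < Y ω}, Y ω ∂μ = ∫ ω in {ω | θ₂ ω < Y' ω}, Y ω ∂μ :=
    setIntegral_congr_set hBB'
  -- (5) measure of the tail
  have hμB : (μ {ω | θ₂ ω < Y ω}).toReal = 1 - α := by
    rw [measure_congr hBB', ← hcompl]
    have hadd : μ {ω | Y' ω ≤ θ₂ ω} + μ {ω | Y' ω ≤ θ₂ ω}ᶜ = 1 := by
      rw [measure_add_measure_compl hA', measure_univ]
    have := congrArg ENNReal.toReal hadd
    rw [ENNReal.toReal_add (measure_ne_top _ _) (measure_ne_top _ _), hμA'] at this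
    simp at this; linarith
  -- (3) expand ψ
  have h3 : ∫ ω, (Y ω - θ₂ ω) * (α - if Y ω ≤ θ₂ ω then 1 else 0) ∂μ
      = α * ∫ ω, Y ω ∂μ - α * ∫ ω, θ₂ ω ∂μ - ∫ ω, Y ω * f ω ∂μ + ∫ ω, θ₂ ω * f ω ∂μ := by
    have heq : ∀ ω, (Y ω - θ₂ ω) * (α - if Y ω ≤ θ₂ ω then 1 else 0)
        = α * Y ω - α * θ₂ ω - Y ω * f ω + θ₂ ω * f ω := by
      intro ω
      have hfω : f ω = if Y ω ≤ θ₂ ω then 1 else 0 := rfl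
      rw [hfω]; by_cases h : Y ω ≤ θ₂ ω <;> simp [h] <;> ring
    simp_rw [heq]
    have i1 : Integrable (fun ω => α * Y ω) μ := hYint.const_mul α
    have i2 : Integrable (fun ω => α * θ₂ ω) μ := hθ₂int.const_mul α
    have i3 : Integrable (fun ω => Y ω * f ω) μ := hYf
    have i4 : Integrable (fun ω => θ₂ ω * f ω) μ := hθf
    have i12 : Integrable (fun ω => α * Y ω - α * θ₂ ω) μ := i1.sub i2
    have i123 : Integrable (fun ω => α * Y ω - α * θ₂ ω - Y ω * f ω) μ := i12.sub i3
    rw [integral_add i123 i4, integral_sub i12 i3,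
      integral_sub i1 i2, integral_const_mul, integral_const_mul]
  rw [h3, h2, h4, hμB, hS]
  have hSY : ∫ ω in {ω | Y' ω ≤ θ₂ ω}, Y ω ∂μ
      = ∫ ω, Y ω ∂μ - ∫ ω in {ω | θ₂ ω < Y' ω}, Y ω ∂μ := by
    rw [← hsplit, hcompl]; ring
  rw [hSY]
  have h1α : (1 : ℝ) - α ≠ 0 := by linarith
  field_simp
  ring


/-- `E[ψ_α(Y; θ₂*)] = (1-α)(E[Y | Y > θ₂*] - E[Y])` where `θ₂*` is the
`σ(X)`-measurable conditional α-quantile (`m` plays the role of `σ(X)`). -/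

theorem contrast_at_cond_quantile {Ω : Type*} [mΩ : MeasurableSpace Ω]
    (μ : Measure Ω) [IsProbabilityMeasure μ]
    (m : MeasurableSpace Ω) (hm : m ≤ mΩ)
    (Y θ₂ : Ω → ℝ) (hθ₂ : StronglyMeasurable[m] θ₂)
    (hYint : Integrable Y μ) (hθ₂int : Integrable θ₂ μ)
    (α : ℝ) (hα : α ∈ Set.Ioo (0 : ℝ) 1)
    (hcond : ∀ᵐ ω ∂μ,
      (μ[Set.indicator {ω' | Y ω' ≤ θ₂ ω'} (fun _ => (1 : ℝ)) | m]) ω = α) :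
    ∫ ω, psi α (Y ω) (θ₂ ω) ∂μ
      = (1 - α) *
        ((∫ ω in {ω | θ₂ ω < Y ω}, Y ω ∂μ) / (μ {ω | θ₂ ω < Y ω}).toReal
          - ∫ ω, Y ω ∂μ) :=
  @contrast_at_cond_quantile_aux Ω m mΩ μ ‹_› hm Y θ₂ hθ₂ hYint hθ₂int α hα hcond
end

section
/- Let Y be an integrable continuous random variable and X a random variable with continuous conditional distribution of Y given X, and assume CTE_α(Y) > E[Y] for α ∈ (0,1). Then the quantile contrast index satisfies 0 ≤ S^α_X ≤ 1, equivalently E[Y] ≤ E[Y | Y > F^{-1}_{Y|X}(α)] ≤ CTE_α(Y). -/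
open MeasureTheory ProbabilityTheory Real Set Filter
open scoped Topology

/-- pointwise expansion lemma -/
lemma qosa_expand {Ω : Type*} [mΩ : MeasurableSpace Ω] (μ : Measure Ω)
    [IsProbabilityMeasure μ] (f g : Ω → ℝ) (S : Set Ω) (hS : MeasurableSet S)
    (hf : Integrable f μ) (hg : Integrable g μ) (α : ℝ) :
    Integrable (fun ω => (f ω - g ω) * (α - S.indicator (fun _ => (1:ℝ)) ω)) μ ∧
    ∫ ω, (f ω - g ω) * (α - S.indicator (fun _ => (1:ℝ)) ω) ∂μ
      = α * ∫ ω, f ω ∂μ - ∫ ω in S, f ω ∂μ - (α * ∫ ω, g ω ∂μ - ∫ ω in S, g ω ∂μ) := by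
  have hfun : (fun ω => (f ω - g ω) * (α - S.indicator (fun _ => (1:ℝ)) ω))
      = fun ω => (α * f ω - S.indicator f ω) - (α * g ω - S.indicator g ω) := by
    funext ω
    by_cases h : ω ∈ S
    · simp [Set.indicator_of_mem h]; ring
    · simp [Set.indicator_of_notMem h]; ring
  have hint : Integrable (fun ω => (α * f ω - S.indicator f ω) - (α * g ω - S.indicator g ω)) μ :=
    ((hf.const_mul α).sub (hf.indicator hS)).sub ((hg.const_mul α).sub (hg.indicator hS))
  have h1 : Integrable (fun ω => α * f ω - S.indicator f ω) μ :=
    (hf.const_mul α).sub (hf.indicator hS)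
  have h2 : Integrable (fun ω => α * g ω - S.indicator g ω) μ :=
    (hg.const_mul α).sub (hg.indicator hS)
  constructor
  · rw [hfun]; exact h1.sub h2
  · rw [hfun, integral_sub h1 h2,
      integral_sub (hf.const_mul α) (hf.indicator hS),
      integral_sub (hg.const_mul α) (hg.indicator hS),
      integral_const_mul, integral_const_mul, integral_indicator hS, integral_indicator hS]

/-- pointwise pinball comparison -/
lemma qosa_pointwise (α y θ θ' : ℝ) :
    (θ - θ') * (α - if y ≤ θ then 1 else 0)
      ≤ (y - θ') * (α - if y ≤ θ' then 1 else 0) - (y - θ) * (α - if y ≤ θ then 1 else 0) := by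
  split_ifs with h1 h2 h2 <;> nlinarith

lemma qosa_pinball_nonneg {α : ℝ} (hα0 : 0 < α) (hα1 : α < 1) (y θ : ℝ) :
    0 ≤ (y - θ) * (α - if y ≤ θ then 1 else 0) := by
  split_ifs with h <;> nlinarith

lemma qosa_compl_toReal {Ω : Type*} [mΩ : MeasurableSpace Ω] (μ : Measure Ω)
    [IsProbabilityMeasure μ] {S : Set Ω} (hS : MeasurableSet S) :
    (μ Sᶜ).toReal = 1 - (μ S).toReal := by
  rw [measure_compl hS (measure_ne_top μ S), measure_univ,
    ENNReal.toReal_sub_of_le prob_le_one ENNReal.one_ne_top, ENNReal.toReal_one]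

lemma qosa_quantile_cdf {Ω : Type*} [mΩ : MeasurableSpace Ω] (μ : Measure Ω)
    [IsProbabilityMeasure μ] (Y : Ω → ℝ) (hY : Measurable Y)
    (hFcont : Continuous fun y : ℝ => (μ {ω | Y ω ≤ y}).toReal)
    {α : ℝ} (hα : α ∈ Set.Ioo (0 : ℝ) 1) :
    (μ {ω | Y ω ≤ quantileFun μ Y α}).toReal = α := by
  set F : ℝ → ℝ := fun y => (μ {ω | Y ω ≤ y}).toReal with hF
  haveI : IsProbabilityMeasure (μ.map Y) := Measure.isProbabilityMeasure_map hY.aemeasurable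
  have hmap : F = fun y => cdf (μ.map Y) y := by
    funext y
    rw [cdf_eq_real, measureReal_def, Measure.map_apply hY measurableSet_Iic]
    rfl
  have hTop : Tendsto F atTop (𝓝 1) := by rw [hmap]; exact tendsto_cdf_atTop _
  have hBot : Tendsto F atBot (𝓝 0) := by rw [hmap]; exact tendsto_cdf_atBot _
  set T : Set ℝ := {y | α ≤ F y} with hT
  have hne : T.Nonempty := by
    obtain ⟨y, hy⟩ := (hTop.eventually (eventually_ge_nhds hα.2)).exists
    exact ⟨y, hy⟩
  have hbdd : BddBelow T := by
    obtain ⟨y₀, hy₀⟩ := eventually_atBot.mp (hBot.eventually (eventually_lt_nhds hα.1))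
    exact ⟨y₀, fun t ht => le_of_not_gt fun h => absurd ht (not_le.mpr (hy₀ t h.le))⟩
  have hclosed : IsClosed T := isClosed_le continuous_const hFcont
  have hmem : quantileFun μ Y α ∈ T := hclosed.csInf_mem hne hbdd
  have hle : F (quantileFun μ Y α) ≤ α := by
    by_contra h
    push_neg at h
    have hev : ∀ᶠ y in 𝓝 (quantileFun μ Y α), α < F y :=
      (hFcont.continuousAt).eventually (eventually_gt_nhds h)
    obtain ⟨y, hy1, hy2⟩ :=
      ((hev.filter_mono nhdsWithin_le_nhds).and
        (self_mem_nhdsWithin (s := Set.Iio (quantileFun μ Y α)))).exists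
    exact absurd (csInf_le hbdd hy1.le) (not_le.mpr hy2)
  exact le_antisymm hle hmem

lemma qosa_main {Ω : Type*} [mΩ : MeasurableSpace Ω]
    (μ : Measure Ω) [IsProbabilityMeasure μ]
    (m : MeasurableSpace Ω) (hm : m ≤ mΩ)
    (Y θ₂ : Ω → ℝ) (hY : Measurable[mΩ] Y) (hθ₂ : StronglyMeasurable[m] θ₂)
    (hYint : Integrable Y μ) (hθ₂int : Integrable θ₂ μ)
    (hFcont : Continuous fun y : ℝ => (μ {ω | Y ω ≤ y}).toReal)
    (α : ℝ) (hα : α ∈ Set.Ioo (0 : ℝ) 1)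
    (hcond : ∀ᵐ ω ∂μ,
      (μ[Set.indicator {ω' | Y ω' ≤ θ₂ ω'} (fun _ => (1 : ℝ)) | m]) ω = α) :
    ((1 - α) * ∫ ω, Y ω ∂μ ≤ ∫ ω in {ω | θ₂ ω < Y ω}, Y ω ∂μ
      ∧ ∫ ω in {ω | θ₂ ω < Y ω}, Y ω ∂μ ≤ ∫ ω in {ω | @quantileFun Ω mΩ μ Y α < Y ω}, Y ω ∂μ)
      ∧ (μ {ω | θ₂ ω < Y ω}).toReal = 1 - α
      ∧ (μ {ω | @quantileFun Ω mΩ μ Y α < Y ω}).toReal = 1 - α := by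
  letI : MeasurableSpace Ω := mΩ
  haveI : SigmaFinite (μ.trim hm) := by infer_instance
  have hθ₂m : Measurable[mΩ] θ₂ := hθ₂.measurable.mono hm le_rfl
  set q : ℝ := @quantileFun Ω mΩ μ Y α with hq_def
  set S : Set Ω := {ω | Y ω ≤ θ₂ ω} with hS_def
  set Sq : Set Ω := {ω | Y ω ≤ q} with hSq_def
  have hS : MeasurableSet[mΩ] S := measurableSet_le hY hθ₂m
  have hSq : MeasurableSet[mΩ] Sq := measurableSet_le hY measurable_const
  have hIm : Measurable[mΩ] (S.indicator (fun _ => (1:ℝ))) :=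
    measurable_const.indicator hS
  have hScompl : {ω | θ₂ ω < Y ω} = Sᶜ := by ext ω; simp [hS_def, not_le]
  have hSqcompl : {ω | q < Y ω} = Sqᶜ := by ext ω; simp [hSq_def, not_le]
  set I : Ω → ℝ := S.indicator (fun _ => (1:ℝ)) with hI_def
  have hIint : Integrable I μ := (integrable_const (1:ℝ)).indicator hS
  -- μ S = α
  have hμS : (μ S).toReal = α := by
    have h1 : ∫ ω, (μ[I|m]) ω ∂μ = ∫ ω, I ω ∂μ := integral_condExp hm
    have h2 : ∫ ω, (μ[I|m]) ω ∂μ = α := by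
      rw [integral_congr_ae hcond]; simp
    have h3 : ∫ ω, I ω ∂μ = (μ S).toReal := by
      rw [hI_def, integral_indicator (μ := μ) hS]; simp [measureReal_def]
    rw [← h3, ← h1, h2]
  -- μ Sq = α (quantile cdf)
  have hμSq : (μ Sq).toReal = α := qosa_quantile_cdf (mΩ := mΩ) μ Y hY hFcont hα
  -- ∫_S θ₂ = α ∫ θ₂
  have hθ₂S : ∫ ω in S, θ₂ ω ∂μ = α * ∫ ω, θ₂ ω ∂μ := by
    have hmul_int : Integrable (θ₂ * I) μ := by
      refine hθ₂int.mono
        (show AEStronglyMeasurable (θ₂ * I) μ from (hθ₂m.mul hIm).aestronglyMeasurable) ?_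
      filter_upwards with ω
      simp only [Pi.mul_apply, norm_mul, Real.norm_eq_abs]
      by_cases h : ω ∈ S
      · simp [hI_def, Set.indicator_of_mem h]
      · simp [hI_def, Set.indicator_of_notMem h, abs_nonneg]
    have hpull := condExp_mul_of_stronglyMeasurable_left hθ₂ hmul_int hIint
    have hind : ∀ ω, θ₂ ω * I ω = S.indicator θ₂ ω := by
      intro ω
      by_cases h : ω ∈ S
      · simp [hI_def, Set.indicator_of_mem h]
      · simp [hI_def, Set.indicator_of_notMem h]
    calc ∫ ω in S, θ₂ ω ∂μ = ∫ ω, S.indicator θ₂ ω ∂μ := (integral_indicator (μ := μ) hS).symm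
      _ = ∫ ω, (θ₂ * I) ω ∂μ := by
          refine integral_congr_ae (Filter.Eventually.of_forall fun ω => ?_)
          exact (hind ω).symm
      _ = ∫ ω, (μ[θ₂ * I|m]) ω ∂μ := (integral_condExp hm).symm
      _ = ∫ ω, θ₂ ω * (μ[I|m]) ω ∂μ := integral_congr_ae hpull
      _ = ∫ ω, θ₂ ω * α ∂μ :=
          integral_congr_ae (hcond.mono fun ω h => by dsimp only; rw [h])
      _ = α * ∫ ω, θ₂ ω ∂μ := by rw [integral_mul_const]; ring
  -- expansions
  obtain ⟨hint1, hE1⟩ := qosa_expand (mΩ := mΩ) μ Y θ₂ S hS hYint hθ₂int α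
  obtain ⟨hint2, hE2⟩ := qosa_expand (mΩ := mΩ) μ Y (fun _ => q) Sq hSq hYint (integrable_const q) α
  obtain ⟨hint3, hE3⟩ := qosa_expand (mΩ := mΩ) μ θ₂ (fun _ => q) S hS hθ₂int (integrable_const q) α
  rw [hθ₂S] at hE1 hE3
  have hcq : ∫ ω, (fun _ : Ω => q) ω ∂μ = q := by simp
  have hcS : ∫ ω in S, (fun _ : Ω => q) ω ∂μ = α * q := by
    rw [setIntegral_const, measureReal_def, hμS, smul_eq_mul]
  have hcSq : ∫ ω in Sq, (fun _ : Ω => q) ω ∂μ = α * q := by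
    rw [setIntegral_const, measureReal_def, hμSq, smul_eq_mul]
  rw [hcq, hcS] at hE3
  rw [hcq, hcSq] at hE2
  -- nonnegativity of pinball at θ₂
  have hpos1 : 0 ≤ ∫ ω, (Y ω - θ₂ ω) * (α - S.indicator (fun _ => (1:ℝ)) ω) ∂μ := by
    refine integral_nonneg fun ω => ?_
    have := qosa_pinball_nonneg hα.1 hα.2 (Y ω) (θ₂ ω)
    simpa [Set.indicator_apply, hS_def] using this
  -- comparison of pinballs
  have hmono : ∫ ω, (θ₂ ω - (fun _ : Ω => q) ω) * (α - S.indicator (fun _ => (1:ℝ)) ω) ∂μ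
      ≤ ∫ ω, ((Y ω - (fun _ : Ω => q) ω) * (α - Sq.indicator (fun _ => (1:ℝ)) ω)
          - (Y ω - θ₂ ω) * (α - S.indicator (fun _ => (1:ℝ)) ω)) ∂μ := by
    refine integral_mono hint3 (hint2.sub hint1) fun ω => ?_
    have := qosa_pointwise α (Y ω) (θ₂ ω) q
    simpa [Set.indicator_apply, hS_def, hSq_def] using this
  rw [integral_sub hint2 hint1] at hmono
  rw [hE1, hE2, hE3] at hmono
  -- split integrals
  have hsplit : ∫ ω in S, Y ω ∂μ + ∫ ω in Sᶜ, Y ω ∂μ = ∫ ω, Y ω ∂μ :=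
    integral_add_compl hS hYint
  have hsplitq : ∫ ω in Sq, Y ω ∂μ + ∫ ω in Sqᶜ, Y ω ∂μ = ∫ ω, Y ω ∂μ :=
    integral_add_compl hSq hYint
  rw [hE1] at hpos1
  rw [hScompl, hSqcompl, qosa_compl_toReal (mΩ := mΩ) μ hS, qosa_compl_toReal (mΩ := mΩ) μ hSq, hμS, hμSq]
  refine ⟨⟨by linarith, by linarith⟩, rfl, rfl⟩


/-- The quantile contrast index lies in `[0,1]`; equivalently
`E[Y] ≤ E[Y | Y > F⁻¹_{Y|X}(α)] ≤ CTE_α(Y)`. Here `m` plays the role of `σ(X)` and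
`θ₂` is the conditional α-quantile of `Y` given `X`. -/
theorem qosa_between_zero_and_one {Ω : Type*} [mΩ : MeasurableSpace Ω]
    (μ : Measure Ω) [IsProbabilityMeasure μ]
    (m : MeasurableSpace Ω) (hm : m ≤ mΩ)
    (Y θ₂ : Ω → ℝ) (hθ₂ : StronglyMeasurable[m] θ₂)
    (hYint : Integrable Y μ) (hθ₂int : Integrable θ₂ μ)
    (hFcont : Continuous fun y : ℝ => (μ {ω | Y ω ≤ y}).toReal)
    (α : ℝ) (hα : α ∈ Set.Ioo (0 : ℝ) 1)
    (hcond : ∀ᵐ ω ∂μ,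
      (μ[Set.indicator {ω' | Y ω' ≤ θ₂ ω'} (fun _ => (1 : ℝ)) | m]) ω = α)
    (hCTE : ∫ ω, Y ω ∂μ < @CTE Ω mΩ μ Y α) :
    (∫ ω, Y ω ∂μ
        ≤ (∫ ω in {ω | θ₂ ω < Y ω}, Y ω ∂μ) / (μ {ω | θ₂ ω < Y ω}).toReal
      ∧ (∫ ω in {ω | θ₂ ω < Y ω}, Y ω ∂μ) / (μ {ω | θ₂ ω < Y ω}).toReal
        ≤ @CTE Ω mΩ μ Y α)
    ∧ 0 ≤ 1 - ((∫ ω in {ω | θ₂ ω < Y ω}, Y ω ∂μ) / (μ {ω | θ₂ ω < Y ω}).toReal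
          - ∫ ω, Y ω ∂μ) / (@CTE Ω mΩ μ Y α - ∫ ω, Y ω ∂μ)
    ∧ 1 - ((∫ ω in {ω | θ₂ ω < Y ω}, Y ω ∂μ) / (μ {ω | θ₂ ω < Y ω}).toReal
          - ∫ ω, Y ω ∂μ) / (@CTE Ω mΩ μ Y α - ∫ ω, Y ω ∂μ) ≤ 1 := by
  letI : MeasurableSpace Ω := mΩ
  have hYm := hYint.1
  set Y' : Ω → ℝ := hYm.mk Y with hY'_def
  have hY' : StronglyMeasurable Y' := hYm.stronglyMeasurable_mk
  have hae : Y =ᵐ[μ] Y' := hYm.ae_eq_mk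
  have hYm' : Measurable Y' := hY'.measurable
  have hY'int : Integrable Y' μ := hYint.congr hae
  have hsets : ∀ y : ℝ, μ {ω | Y ω ≤ y} = μ {ω | Y' ω ≤ y} := fun y =>
    measure_congr (eventuallyEq_set.mpr (hae.mono fun ω h => by simp [h]))
  have hFcont' : Continuous fun y : ℝ => (μ {ω | Y' ω ≤ y}).toReal := by
    have he : (fun y : ℝ => (μ {ω | Y' ω ≤ y}).toReal)
        = fun y => (μ {ω | Y ω ≤ y}).toReal := by
      funext y; rw [hsets y]
    rw [he]; exact hFcont
  have hqeq : @quantileFun Ω mΩ μ Y α = @quantileFun Ω mΩ μ Y' α := by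
    unfold quantileFun
    congr 1
    ext y
    rw [Set.mem_setOf_eq, Set.mem_setOf_eq, hsets y]
  have hEY : ∫ ω, Y ω ∂μ = ∫ ω, Y' ω ∂μ := integral_congr_ae hae
  have hltθ : ({ω | θ₂ ω < Y ω} : Set Ω) =ᵐ[μ] {ω | θ₂ ω < Y' ω} :=
    eventuallyEq_set.mpr (hae.mono fun ω h => by simp [h])
  have hμlt : μ {ω | θ₂ ω < Y ω} = μ {ω | θ₂ ω < Y' ω} := measure_congr hltθ
  have hIlt : ∫ ω in {ω | θ₂ ω < Y ω}, Y ω ∂μ = ∫ ω in {ω | θ₂ ω < Y' ω}, Y' ω ∂μ := by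
    rw [setIntegral_congr_set hltθ]
    exact integral_congr_ae (ae_restrict_of_ae hae)
  have hCTEeq : @CTE Ω mΩ μ Y α = @CTE Ω mΩ μ Y' α := by
    unfold CTE
    rw [hqeq]
    have hltc : ({ω | quantileFun μ Y' α < Y ω} : Set Ω)
        =ᵐ[μ] {ω | quantileFun μ Y' α < Y' ω} :=
      eventuallyEq_set.mpr (hae.mono fun ω h => by simp [h])
    rw [setIntegral_congr_set hltc, measure_congr hltc]
    congr 1
    exact integral_congr_ae (ae_restrict_of_ae hae)
  have hcond' : ∀ᵐ ω ∂μ,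
      (μ[Set.indicator {ω' | Y' ω' ≤ θ₂ ω'} (fun _ => (1 : ℝ)) | m]) ω = α := by
    have hind : Set.indicator {ω' | Y ω' ≤ θ₂ ω'} (fun _ => (1:ℝ))
        =ᵐ[μ] Set.indicator {ω' | Y' ω' ≤ θ₂ ω'} (fun _ => (1:ℝ)) :=
      hae.mono fun ω h => by simp [Set.indicator_apply, h]
    filter_upwards [hcond, condExp_congr_ae (m := m) hind] with ω h1 h2
    rw [← h2]; exact h1
  obtain ⟨⟨hlow, hupp⟩, hμθ, hμq⟩ :=
    qosa_main μ m hm Y' θ₂ hYm' hθ₂ hY'int hθ₂int hFcont' α hα hcond'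
  rw [hCTEeq, hEY] at hCTE
  rw [hCTEeq, hIlt, hμlt, hEY]
  have hCTEval : @CTE Ω mΩ μ Y' α
      = (∫ ω in {ω | quantileFun μ Y' α < Y' ω}, Y' ω ∂μ) / (1 - α) := by
    unfold CTE; rw [hμq]
  rw [hCTEval] at hCTE
  rw [hCTEval]
  rw [hμθ]
  set a := ∫ ω, Y' ω ∂μ
  set b := ∫ ω in {ω | θ₂ ω < Y' ω}, Y' ω ∂μ
  set c := ∫ ω in {ω | quantileFun μ Y' α < Y' ω}, Y' ω ∂μ
  have hpos : 0 < 1 - α := by linarith [hα.2]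
  have h1 : a ≤ b / (1 - α) := (le_div_iff₀ hpos).mpr (by linarith)
  have h2 : b / (1 - α) ≤ c / (1 - α) := (div_le_div_iff_of_pos_right hpos).mpr hupp
  have h3 : a < c / (1 - α) := hCTE
  refine ⟨⟨h1, h2⟩, ?_, ?_⟩
  · have : (b / (1 - α) - a) / (c / (1 - α) - a) ≤ 1 :=
      (div_le_one (by linarith)).mpr (by linarith)
    linarith
  · have : 0 ≤ (b / (1 - α) - a) / (c / (1 - α) - a) :=
      div_nonneg (by linarith) (by linarith)
    linarith
end
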